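/- Fix ρ > 0. Suppose Φ : [0,∞) → (0,1] is differentiable on (0,∞), continuous at 0 with Φ(0) = 1, not identically 1, and satisfies the equation s Φ'(s) = ρ Φ(s)(Φ(s) − 1) for all s > 0 (equivalently, Φ(s) = exp(−ρ ∫₀^s (1 − Φ(u)) u^{−1} du), i.e. Φ is the Laplace transform of a shot noise distribution generated by a jump law whose Laplace transform is Φ itself). Then there exists β > 0 such that Φ(s) = 1/(1 + β s^ρ) for all s ≥ 0. (The positive Linnik laws are the only SN distributions generated by themselves.) -/

import Mathlib

open MeasureTheory Filter Set

/-- **(Uniqueness of self-generated shot noise laws.)** Fix `ρ > 0`. If `Φ : [0,∞) → (0,1]`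
is differentiable on `(0,∞)`, continuous at `0` (from the right) with `Φ(0) = 1`, not
identically `1`, and satisfies `s Φ'(s) = ρ Φ(s)(Φ(s) − 1)` for `s > 0` (i.e. `Φ` is the
Laplace transform of a shot noise distribution generated by itself), then
`Φ(s) = 1/(1+βs^ρ)` for some `β > 0`: the positive Linnik laws are the only shot noise
distributions generated by themselves. -/
theorem self_generated_shot_noise_is_linnik
    (ρ : ℝ) (hρ : 0 < ρ) (Φ : ℝ → ℝ)
    (hrange : ∀ s ≥ (0:ℝ), Φ s ∈ Set.Ioc (0:ℝ) 1)
    (hΦ0 : Φ 0 = 1)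
    (hcont : ContinuousWithinAt Φ (Set.Ici 0) 0)
    (hne : ¬ ∀ s ≥ (0:ℝ), Φ s = 1)
    (hODE : ∀ s > (0:ℝ), HasDerivAt Φ (ρ * Φ s * (Φ s - 1) / s) s) :
    ∃ β > (0:ℝ), ∀ s ≥ (0:ℝ), Φ s = 1 / (1 + β * s ^ ρ) := by
  set g : ℝ → ℝ := fun s => ((Φ s)⁻¹ - 1) * s ^ (-ρ) with hg_def
  have hg' : ∀ s > (0:ℝ), HasDerivAt g 0 s := by
    intro s hs
    have hΦs := hrange s hs.le
    have hΦne : Φ s ≠ 0 := ne_of_gt hΦs.1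
    have h1 := hODE s hs
    have h2 : HasDerivAt (fun t => (Φ t)⁻¹ - 1)
        (-(ρ * Φ s * (Φ s - 1) / s) / (Φ s) ^ 2) s := (h1.inv hΦne).sub_const 1
    have h3 : HasDerivAt (fun t : ℝ => t ^ (-ρ)) (-ρ * s ^ (-ρ - 1)) s :=
      Real.hasDerivAt_rpow_const (Or.inl hs.ne')
    have h4 := h2.mul h3
    convert h4 using 1
    · rfl
    · rfl
    · rfl
    have hsub : s ^ (-ρ - 1) = s ^ (-ρ) / s := by
      rw [Real.rpow_sub hs, Real.rpow_one]
    rw [hsub]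
    field_simp
    ring
  have key : ∀ a b : ℝ, 0 < a → a ≤ b → g a = g b := by
    intro a b ha hab
    have := constant_of_has_deriv_right_zero (f := g) (a := a) (b := b)
      (fun x hx => (hg' x (lt_of_lt_of_le ha hx.1)).continuousAt.continuousWithinAt)
      (fun x hx => (hg' x (lt_of_lt_of_le ha hx.1)).hasDerivWithinAt)
    exact (this b (right_mem_Icc.2 hab)).symm
  have key' : ∀ a b : ℝ, 0 < a → 0 < b → g a = g b := by
    intro a b ha hb
    rcases le_total a b with h | h
    · exact key a b ha h
    · exact (key b a hb h).symm
  push_neg at hne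
  obtain ⟨s0, hs0ge, hΦs0⟩ := hne
  have hs0pos : 0 < s0 := by
    rcases hs0ge.lt_or_eq with h | h
    · exact h
    · exact absurd (h ▸ hΦ0) hΦs0
  have hΦs0m := hrange s0 hs0ge
  have hΦs0lt : Φ s0 < 1 := lt_of_le_of_ne hΦs0m.2 hΦs0
  have hβpos : 0 < g s0 := by
    apply mul_pos
    · have h1 : 1 < (Φ s0)⁻¹ := (one_lt_inv₀ hΦs0m.1).mpr hΦs0lt
      linarith
    · exact Real.rpow_pos_of_pos hs0pos _
  refine ⟨g s0, hβpos, fun s hs => ?_⟩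
  rcases hs.lt_or_eq with hspos | hs0
  · have hΦsm := hrange s hs
    have hΦne : Φ s ≠ 0 := ne_of_gt hΦsm.1
    have hgs : g s = g s0 := key' s s0 hspos hs0pos
    have hsp : (0:ℝ) < s ^ ρ := Real.rpow_pos_of_pos hspos ρ
    have hneg : s ^ (-ρ) = (s ^ ρ)⁻¹ := Real.rpow_neg hspos.le ρ
    rw [hg_def] at hgs
    simp only [hneg] at hgs
    have hden : (0:ℝ) < 1 + g s0 * s ^ ρ := by positivity
    have h5 : (Φ s)⁻¹ - 1 = g s0 * s ^ ρ := by
      have h := congrArg (fun x => x * s ^ ρ) hgs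
      show (Φ s)⁻¹ - 1 = ((Φ s0)⁻¹ - 1) * s0 ^ (-ρ) * s ^ ρ
      simpa [mul_assoc, inv_mul_cancel₀ hsp.ne'] using h
    rw [eq_div_iff hden.ne', ← h5]
    have h6 : 1 + ((Φ s)⁻¹ - 1) = (Φ s)⁻¹ := by ring
    rw [h6, mul_inv_cancel₀ hΦne]
  · rw [← hs0, hΦ0, Real.zero_rpow hρ.ne']
    norm_num
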